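/- Let n ≥ 1 and let (F, Σₙ, ⬠) be an (n+2)-angulated Krull–Schmidt category. Let A ⊆ F be a full, additive, n-extension closed subcategory with Hom_F(ΣₙA, A) = 0. Then there is an isomorphism Hom_F(A_{n+1}, ΣₙA₀) ≅ YExtⁿ_{(A,E_A)}(A_{n+1}, A₀) for all A₀, A_{n+1} ∈ A, which is natural in both arguments and bilinear, i.e. an isomorphism of functors A × Aᵒᵖ → Ab between Hom_F(−, Σₙ(−)) and YExtⁿ_{(A,E_A)}(−, −). -/

import Mathlib

open CategoryTheory CategoryTheory.Limits

universe v u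

namespace NAng

instance (priority := 100) hasBinBiprod (C : Type u) [Category.{v} C] [Preadditive C]
    [HasFiniteBiproducts C] : HasBinaryBiproducts C :=
  hasBinaryBiproducts_of_finite_biproducts C

variable {C : Type u} [Category.{v} C] [Preadditive C] [HasFiniteBiproducts C]

/-- A morphism `f : X ⟶ Y` lies in the radical if for every `g : Y ⟶ X` the
endomorphism `𝟙 X - f ≫ g` is invertible. -/
def InRad {X Y : C} (f : X ⟶ Y) : Prop :=
  ∀ g : Y ⟶ X, IsIso (𝟙 X - f ≫ g)

/-- A Krull–Schmidt category: every object is a finite direct sum of objects having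
local endomorphism rings. -/
def KrullSchmidt (C : Type u) [Category.{v} C] [Preadditive C] [HasFiniteBiproducts C] : Prop :=
  ∀ X : C, ∃ (k : ℕ) (Y : Fin k → C),
    Nonempty (X ≅ ⨁ Y) ∧ ∀ i, IsLocalRing (End (Y i))

/-- `Z ∈ add M`: `Z` is a retract of a finite direct sum of copies of `M`. -/
def InAdd (M Z : C) : Prop :=
  ∃ (k : ℕ) (ι : Z ⟶ ⨁ fun _ : Fin k => M) (π : (⨁ fun _ : Fin k => M) ⟶ Z),
    ι ≫ π = 𝟙 Z

variable (n : ℕ) (S : C ⥤ C)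

/-- An "unrolled" candidate `(n+2)`-angle: an infinite complex which is
`(n+2)`-periodic up to `S` and the sign `(-1)ⁿ`.  The (n+2)-angle
`X₀ → X₁ → ⋯ → X_{n+1} → S X₀` is recorded by the objects `X 0, …, X (n+1)`,
the maps `d 0, …, d n`, and the connecting morphism `d (n+1) ≫ (σ 0).hom`. -/
structure Cand where
  X : ℕ → C
  d : ∀ i, X i ⟶ X (i + 1)
  σ : ∀ i, X (n + 2 + i) ≅ S.obj (X i)
  compat : ∀ i, d (n + 2 + i) =
    (σ i).hom ≫ (((-1 : ℤ) ^ n) • S.map (d i)) ≫ (σ (i + 1)).inv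

/-- A morphism of candidate `(n+2)`-angles. -/
structure CandHom (A B : Cand n S) where
  φ : ∀ i, A.X i ⟶ B.X i
  comm : ∀ i, A.d i ≫ φ (i + 1) = φ i ≫ B.d i
  shift : ∀ i, φ (n + 2 + i) = (A.σ i).hom ≫ S.map (φ i) ≫ (B.σ i).inv

variable {n S}

/-- Rotation of a candidate `(n+2)`-angle. -/
def Cand.rot (A : Cand n S) : Cand n S where
  X i := A.X (i + 1)
  d i := A.d (i + 1)
  σ i := A.σ (i + 1)
  compat i := A.compat (i + 1)

/-- The connecting morphism `X_{n+1} ⟶ S X₀` of a candidate `(n+2)`-angle. -/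
def Cand.conn (A : Cand n S) : A.X (n + 1) ⟶ S.obj (A.X 0) :=
  A.d (n + 1) ≫ (A.σ 0).hom

variable (n S)

instance (priority := 100) preservesBinaryBiproductsOfAdditive {D : Type u} [Category.{v} D]
    [Preadditive D] (F : C ⥤ D) [F.Additive] : PreservesBinaryBiproducts F :=
  preservesBinaryBiproducts_of_preservesBiproducts F

/-- The differentials of the mapping cone of a morphism of candidate `(n+2)`-angles. -/
noncomputable def coneD {A B : Cand n S} (Φ : CandHom n S A B) (j : ℕ) :
    (A.X (j + 1)) ⊞ (B.X j) ⟶ (A.X (j + 2)) ⊞ (B.X (j + 1)) :=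
  biprod.fst ≫ (-(A.d (j + 1))) ≫ biprod.inl +
  biprod.fst ≫ Φ.φ (j + 1) ≫ biprod.inr +
  biprod.snd ≫ B.d j ≫ biprod.inr

/-- The periodicity isomorphisms of the mapping cone. -/
noncomputable def coneSigma [S.Additive] (A B : Cand n S) (j : ℕ) :
    (A.X (n + 2 + j + 1)) ⊞ (B.X (n + 2 + j)) ⟶ S.obj ((A.X (j + 1)) ⊞ (B.X j)) :=
  biprod.map (((-1 : ℤ) ^ n) • (A.σ (j + 1)).hom) ((B.σ j).hom) ≫
    (S.mapBiprod (A.X (j + 1)) (B.X j)).inv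

/-- A pre-`(n+2)`-angulated structure: a class of `(n+2)`-angles satisfying the
axioms (F1), (F2) and (F3) of Geiss–Keller–Oppermann. -/
structure PreAngulation where
  angles : Set (Cand n S)
  /-- (F1) closure under direct summands (hence under isomorphisms). -/
  retract_mem : ∀ {A B : Cand n S}, B ∈ angles →
    ∀ (ι : CandHom n S A B) (π : CandHom n S B A),
      (∀ i, ι.φ i ≫ π.φ i = 𝟙 (A.X i)) → A ∈ angles
  /-- (F1) closure under direct sums. -/
  sum_mem : ∀ {A B T : Cand n S}, A ∈ angles → B ∈ angles →
    ∀ (ιA : CandHom n S A T) (ιB : CandHom n S B T)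
      (πA : CandHom n S T A) (πB : CandHom n S T B),
      (∀ i, ιA.φ i ≫ πA.φ i = 𝟙 (A.X i)) →
      (∀ i, ιB.φ i ≫ πB.φ i = 𝟙 (B.X i)) →
      (∀ i, ιA.φ i ≫ πB.φ i = 0) →
      (∀ i, ιB.φ i ≫ πA.φ i = 0) →
      (∀ i, πA.φ i ≫ ιA.φ i + πB.φ i ≫ ιB.φ i = 𝟙 (T.X i)) →
      T ∈ angles
  /-- (F1) trivial `(n+2)`-angles belong to the class. -/
  triv_mem : ∀ T : Cand n S, IsIso (T.d 0) →
    (∀ j, 2 ≤ j → j ≤ n + 1 → IsZero (T.X j)) → T ∈ angles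
  /-- (F1) every morphism is the first morphism of some `(n+2)`-angle. -/
  complete : ∀ {X₀ X₁ : C} (f : X₀ ⟶ X₁),
    ∃ A ∈ angles, ∃ (e₀ : Cand.X A 0 ≅ X₀) (e₁ : Cand.X A 1 ≅ X₁),
      Cand.d A 0 = e₀.hom ≫ f ≫ e₁.inv
  /-- (F2) a candidate is an `(n+2)`-angle iff its rotation is. -/
  rot_mem : ∀ A : Cand n S, A ∈ angles ↔ A.rot ∈ angles
  /-- (F3) completion of commutative squares to morphisms of `(n+2)`-angles. -/
  ext_hom : ∀ {A B : Cand n S}, A ∈ angles → B ∈ angles →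
    ∀ (φ₀ : Cand.X A 0 ⟶ Cand.X B 0) (φ₁ : Cand.X A 1 ⟶ Cand.X B 1),
      Cand.d A 0 ≫ φ₁ = φ₀ ≫ Cand.d B 0 →
      ∃ Φ : CandHom n S A B, Φ.φ 0 = φ₀ ∧ Φ.φ 1 = φ₁

/-- An `(n+2)`-angulated structure: a pre-`(n+2)`-angulated structure satisfying
moreover the higher octahedral axiom, in the "good morphism"/mapping cone form of
Bergh–Thaule (equivalent to (F4) and to (N4*)). -/
structure Angulation [S.Additive] extends PreAngulation n S where
  octa : ∀ {A B : Cand n S}, A ∈ angles → B ∈ angles →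
    ∀ (φ₀ : Cand.X A 0 ⟶ Cand.X B 0) (φ₁ : Cand.X A 1 ⟶ Cand.X B 1),
      Cand.d A 0 ≫ φ₁ = φ₀ ≫ Cand.d B 0 →
      ∃ Φ : CandHom n S A B, Φ.φ 0 = φ₀ ∧ Φ.φ 1 = φ₁ ∧
        ∃ T ∈ angles, ∃ e : ∀ j, Cand.X T j ≅ (Cand.X A (j + 1)) ⊞ (Cand.X B j),
          (∀ j, Cand.d T j = (e j).hom ≫ coneD n S Φ j ≫ (e (j + 1)).inv) ∧
          (∀ j, (Cand.σ T j).hom =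
            (e (n + 2 + j)).hom ≫ coneSigma n S A B j ≫ S.map (e j).inv)

/-- A full subcategory (given by a predicate on objects) is additive if it contains
the zero objects and is closed under binary direct sums and direct summands. -/
def AddClosed (P : C → Prop) : Prop :=
  (∀ X : C, IsZero X → P X) ∧
  (∀ X Y : C, P X → P Y → P (X ⊞ Y)) ∧
  (∀ X Y : C, P Y → ∀ (i : X ⟶ Y) (r : Y ⟶ X), i ≫ r = 𝟙 X → P X)

/-- The subcategory `P` is `n`-extension closed with respect to the class `ang` of
`(n+2)`-angles. -/
def ExtClosed (P : C → Prop) (ang : Set (Cand n S)) : Prop :=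
  ∀ {A₀ Atop : C}, P A₀ → P Atop → ∀ f : Atop ⟶ S.obj A₀,
    ∃ W ∈ ang, ∃ (e₀ : Cand.X W 0 ≅ A₀) (etop : Cand.X W (n + 1) ≅ Atop),
      (∀ j, 1 ≤ j → j ≤ n → P (Cand.X W j)) ∧
      Cand.conn W = etop.hom ≫ f ≫ S.map e₀.inv

/-- The candidate `(n+2)`-angle `W` matches the finite complex `(X, d)` in
positions `0, …, n+1`. -/
def Matches (W : Cand n S) (X : ℕ → C) (d : ∀ i, X i ⟶ X (i + 1)) : Prop :=
  ∃ e : ∀ j, j ≤ n + 1 → (Cand.X W j ≅ X j),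
    ∀ j (h : j + 1 ≤ n + 1),
      Cand.d W j = (e j (Nat.le_of_succ_le h)).hom ≫ d j ≫ (e (j + 1) h).inv

/-- `(X, d)` is an `𝒜`-conflation: a complex with terms in `P` which can be
completed to an `(n+2)`-angle. -/
def IsConflation (P : C → Prop) (ang : Set (Cand n S))
    (X : ℕ → C) (d : ∀ i, X i ⟶ X (i + 1)) : Prop :=
  (∀ j, j ≤ n + 1 → P (X j)) ∧ ∃ W ∈ ang, Matches n S W X d

/-- An `𝒜`-inflation: a morphism in position `0` of some `𝒜`-conflation. -/
def IsInflation (P : C → Prop) (ang : Set (Cand n S)) {X₀ X₁ : C} (f : X₀ ⟶ X₁) : Prop :=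
  ∃ (X : ℕ → C) (d : ∀ i, X i ⟶ X (i + 1)), IsConflation n S P ang X d ∧
    ∃ (e₀ : X 0 ≅ X₀) (e₁ : X 1 ≅ X₁), d 0 = e₀.hom ≫ f ≫ e₁.inv

/-- An `𝒜`-deflation: a morphism in position `n` of some `𝒜`-conflation. -/
def IsDeflation (P : C → Prop) (ang : Set (Cand n S)) {Y₀ Y₁ : C} (f : Y₀ ⟶ Y₁) : Prop :=
  ∃ (X : ℕ → C) (d : ∀ i, X i ⟶ X (i + 1)), IsConflation n S P ang X d ∧
    ∃ (e₀ : X n ≅ Y₀) (e₁ : X (n + 1) ≅ Y₁), d n = e₀.hom ≫ f ≫ e₁.inv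

variable {n S}

end NAng

namespace NAng

variable {C : Type u} [Category.{v} C] [Preadditive C] [HasFiniteBiproducts C]

/-- `g` is a weak cokernel of `f` (in the ambient category). -/
def IsWeakCokernel {X Y Z : C} (f : X ⟶ Y) (g : Y ⟶ Z) : Prop :=
  f ≫ g = 0 ∧ ∀ (W : C) (h : Y ⟶ W), f ≫ h = 0 → ∃ k : Z ⟶ W, h = g ≫ k

/-- `f` is a weak kernel of `g` (in the ambient category). -/
def IsWeakKernel {X Y Z : C} (f : X ⟶ Y) (g : Y ⟶ Z) : Prop :=
  f ≫ g = 0 ∧ ∀ (W : C) (h : W ⟶ Y), h ≫ g = 0 → ∃ k : W ⟶ X, h = k ≫ f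

/-- `g` is a weak cokernel of `f` in the full subcategory `P`. -/
def WeakCokernelIn (P : C → Prop) {X Y Z : C} (f : X ⟶ Y) (g : Y ⟶ Z) : Prop :=
  f ≫ g = 0 ∧ ∀ (W : C), P W → ∀ h : Y ⟶ W, f ≫ h = 0 → ∃ k : Z ⟶ W, h = g ≫ k

/-- `f` is a weak kernel of `g` in the full subcategory `P`. -/
def WeakKernelIn (P : C → Prop) {X Y Z : C} (f : X ⟶ Y) (g : Y ⟶ Z) : Prop :=
  f ≫ g = 0 ∧ ∀ (W : C), P W → ∀ h : W ⟶ Y, h ≫ g = 0 → ∃ k : W ⟶ X, h = k ≫ f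

/-- `f` is a monomorphism in the full subcategory `P`. -/
def MonoIn (P : C → Prop) {X Y : C} (f : X ⟶ Y) : Prop :=
  ∀ (W : C), P W → ∀ a b : W ⟶ X, a ≫ f = b ≫ f → a = b

/-- `f` is an epimorphism in the full subcategory `P`. -/
def EpiIn (P : C → Prop) {X Y : C} (f : X ⟶ Y) : Prop :=
  ∀ (W : C), P W → ∀ a b : Y ⟶ W, f ≫ a = f ≫ b → a = b

variable (n : ℕ)

/-- `(X, d)` (positions `0, …, n+1`) is an `n`-exact sequence in the full additive
subcategory `P`. -/
def IsNExact (P : C → Prop) (X : ℕ → C) (d : ∀ i, X i ⟶ X (i + 1)) : Prop :=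
  (∀ j, j ≤ n + 1 → P (X j)) ∧
  MonoIn P (d 0) ∧ EpiIn P (d n) ∧
  (∀ i, i < n → WeakCokernelIn P (d i) (d (i + 1))) ∧
  (∀ i, i < n → WeakKernelIn P (d i) (d (i + 1)))

/-- An `n`-pushout diagram in the sense of Jasso, of the rows
`X 0 → ⋯ → X n` and `Y 0 → ⋯ → Y n` along the vertical morphisms `φ`. -/
def IsNPushout (P : C → Prop) (X : ℕ → C) (dX : ∀ i, X i ⟶ X (i + 1))
    (Y : ℕ → C) (dY : ∀ i, Y i ⟶ Y (i + 1)) (φ : ∀ k, X k ⟶ Y k) : Prop :=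
  (∀ k, k < n → dX k ≫ φ (k + 1) = φ k ≫ dY k) ∧
  ∃ (Q : ℕ → C) (dQ : ∀ i, Q i ⟶ Q (i + 1)) (α₀ : Q 0 ≅ X 0)
    (α : ∀ k, 1 ≤ k → k ≤ n → (Q k ≅ (X k) ⊞ (Y (k - 1)))) (αtop : Q (n + 1) ≅ Y n),
    (∀ h : 1 ≤ n,
      dQ 0 = α₀.hom ≫ biprod.lift (-(dX 0)) (φ 0) ≫ (α 1 le_rfl h).inv) ∧
    (∀ j, (h : j + 2 ≤ n) →
      dQ (j + 1) = (α (j + 1) (by omega) (by omega)).hom ≫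
        (biprod.fst ≫ (-(dX (j + 1))) ≫ biprod.inl +
         biprod.fst ≫ φ (j + 1) ≫ biprod.inr +
         biprod.snd ≫ dY j ≫ biprod.inr) ≫ (α (j + 2) (by omega) h).inv) ∧
    (∀ j, (h : j + 1 = n) →
      dQ (j + 1) = (α (j + 1) (by omega) (by omega)).hom ≫
        biprod.desc (φ (j + 1)) (dY j) ≫ eqToHom (by rw [h]) ≫ αtop.inv ≫
          eqToHom (by rw [h])) ∧
    (∀ k, k < n → WeakCokernelIn P (dQ k) (dQ (k + 1)))

/-- An `n`-pullback diagram in the sense of Jasso, of the rows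
`X 1 → ⋯ → X (n+1)` and `Y 1 → ⋯ → Y (n+1)` along the vertical morphisms `ψ`. -/
def IsNPullback (P : C → Prop) (X : ℕ → C) (dX : ∀ i, X i ⟶ X (i + 1))
    (Y : ℕ → C) (dY : ∀ i, Y i ⟶ Y (i + 1)) (ψ : ∀ k, Y k ⟶ X k) : Prop :=
  (∀ k, 1 ≤ k → k ≤ n → dY k ≫ ψ (k + 1) = ψ k ≫ dX k) ∧
  ∃ (Q : ℕ → C) (dQ : ∀ i, Q i ⟶ Q (i + 1)) (α₀ : Q 0 ≅ Y 1)
    (α : ∀ k, 1 ≤ k → k ≤ n → (Q k ≅ (Y (k + 1)) ⊞ (X k))) (αtop : Q (n + 1) ≅ X (n + 1)),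
    (∀ h : 1 ≤ n,
      dQ 0 = α₀.hom ≫ biprod.lift (-(dY 1)) (ψ 1) ≫ (α 1 le_rfl h).inv) ∧
    (∀ k, (h1 : 1 ≤ k) → (h : k + 1 ≤ n) →
      dQ k = (α k h1 (by omega)).hom ≫
        (biprod.fst ≫ (-(dY (k + 1))) ≫ biprod.inl +
         biprod.fst ≫ ψ (k + 1) ≫ biprod.inr +
         biprod.snd ≫ dX k ≫ biprod.inr) ≫ (α (k + 1) (by omega) h).inv) ∧
    (∀ h : 1 ≤ n,
      dQ n = (α n h le_rfl).hom ≫ biprod.desc (ψ (n + 1)) (dX n) ≫ αtop.inv) ∧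
    (∀ k, k < n → WeakKernelIn P (dQ k) (dQ (k + 1)))

end NAng

namespace NAng

variable {C : Type u} [Category.{v} C] [Preadditive C] [HasFiniteBiproducts C]
variable (n : ℕ) (S : C ⥤ C) (P : C → Prop) (ang : Set (Cand n S))

/-- An `A`-conflation regarded as an `n`-extension of `Atop` by `A₀`. -/
structure ExtSeq (A₀ Atop : C) where
  X : ℕ → C
  d : ∀ i, X i ⟶ X (i + 1)
  confl : IsConflation n S P ang X d
  e₀ : X 0 ≅ A₀
  etop : X (n + 1) ≅ Atop

/-- The relation generating the equivalence of `n`-extensions: a morphism of complexes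
which is the identity on the end terms `A₀` and `Atop`. -/
def ExtRel {A₀ Atop : C} (E F : ExtSeq n S P ang A₀ Atop) : Prop :=
  ∃ φ : ∀ j, E.X j ⟶ F.X j,
    (∀ j, j ≤ n → E.d j ≫ φ (j + 1) = φ j ≫ F.d j) ∧
    φ 0 = E.e₀.hom ≫ F.e₀.inv ∧ φ (n + 1) = E.etop.hom ≫ F.etop.inv

/-- The `n`-Yoneda extension classes: `A`-conflations from `A₀` to `Atop` modulo the
equivalence relation generated by `ExtRel`. -/
def YExt (A₀ Atop : C) := Quot (ExtRel n S P ang (A₀ := A₀) (Atop := Atop))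

/-- `E` realizes `f : Atop ⟶ Σₙ A₀`, i.e. `E` is obtained from an `(n+2)`-angle with
connecting morphism `f`. -/
def Realizes {A₀ Atop : C} (E : ExtSeq n S P ang A₀ Atop) (f : Atop ⟶ S.obj A₀) : Prop :=
  ∃ W ∈ ang, ∃ e : ∀ j, j ≤ n + 1 → (Cand.X W j ≅ E.X j),
    (∀ j (h : j + 1 ≤ n + 1),
      Cand.d W j = (e j (Nat.le_of_succ_le h)).hom ≫ E.d j ≫ (e (j + 1) h).inv) ∧
    Cand.conn W = (e (n + 1) le_rfl).hom ≫ E.etop.hom ≫ f ≫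
      S.map (E.e₀.inv ≫ (e 0 (Nat.zero_le _)).inv)

/-! ### Auxiliary development -/

section AuxArith

lemma aux_mod_left (n i : ℕ) : (n + 2 + i) % (n + 2) = i % (n + 2) :=
  Nat.add_mod_left _ _

lemma aux_div_left (n i : ℕ) : (n + 2 + i) / (n + 2) = i / (n + 2) + 1 := by
  rw [Nat.add_comm (n + 2) i, Nat.add_div_right _ (by omega)]

lemma aux_succ_mod (n i : ℕ) (h : i % (n + 2) = 0) : (i + 1) % (n + 2) = 1 := by
  have h1 : 1 % (n + 2) = 1 := Nat.mod_eq_of_lt (by omega)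
  rw [Nat.add_mod, h, Nat.zero_add, h1, h1]

lemma aux_succ_div (n i : ℕ) (h : i % (n + 2) = 0) : (i + 1) / (n + 2) = i / (n + 2) := by
  rw [Nat.succ_div]
  have hnd : ¬ (n + 2) ∣ (i + 1) := by
    intro hd
    have h2 : (i + 1) % (n + 2) = 0 := (Nat.dvd_iff_mod_eq_zero).mp hd
    rw [aux_succ_mod n i h] at h2
    omega
  simp [hnd]

lemma aux_neg_one_sq (m : ℕ) : ((-1 : ℤ) ^ m) * ((-1 : ℤ) ^ m) = 1 := by
  rw [← pow_add, ← two_mul, pow_mul, neg_one_sq, one_pow]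

end AuxArith

section AuxHelpers

lemma heq_to_eq {W X Y Z : C} (p : W = X) (q : Y = Z) {f : W ⟶ Y} {g : X ⟶ Z}
    (h : HEq f g) : f = eqToHom p ≫ g ≫ eqToHom q.symm := by
  subst p; subst q
  simpa using eq_of_heq h

lemma isIso_zsmul_eqToHom {X Y : C} (m : ℕ) (p : X = Y) :
    IsIso (((-1 : ℤ) ^ m) • eqToHom p) := by
  subst p
  refine ⟨((-1 : ℤ) ^ m) • 𝟙 X, ?_, ?_⟩ <;>
    simp [smul_smul, aux_neg_one_sq]

lemma eps_eps_smul (m : ℕ) {X Y : C} (f : X ⟶ Y) :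
    ((-1 : ℤ) ^ m) • ((-1 : ℤ) ^ m) • f = f := by
  rw [smul_smul, aux_neg_one_sq, one_smul]

end AuxHelpers

section AuxTriv

open ZeroObject

/-- The objects of the trivial `(n+2)`-angle on `Z`. -/
noncomputable def trivX (Z : C) (i : ℕ) : C :=
  S.obj^[i / (n + 2)] (if i % (n + 2) ≤ 1 then Z else (0 : C))

lemma trivX_succ (Z : C) {i : ℕ} (h : i % (n + 2) = 0) :
    trivX n S Z i = trivX n S Z (i + 1) := by
  unfold trivX
  rw [aux_succ_mod n i h, aux_succ_div n i h, h]
  simp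

lemma trivX_shift (Z : C) (i : ℕ) :
    trivX n S Z (n + 2 + i) = S.obj (trivX n S Z i) := by
  unfold trivX
  rw [aux_mod_left, aux_div_left, Function.iterate_succ_apply']

lemma trivX_zero (Z : C) : trivX n S Z 0 = Z := by
  unfold trivX
  rw [Nat.zero_mod, Nat.zero_div]
  simp

lemma trivX_one (Z : C) : trivX n S Z 1 = Z := by
  unfold trivX
  rw [Nat.mod_eq_of_lt (by omega), Nat.div_eq_of_lt (by omega)]
  simp

lemma trivX_isZero (Z : C) {j : ℕ} (h2 : 2 ≤ j) (hj : j ≤ n + 1) :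
    IsZero (trivX n S Z j) := by
  unfold trivX
  rw [Nat.mod_eq_of_lt (by omega), Nat.div_eq_of_lt (by omega),
    if_neg (by omega), Function.iterate_zero_apply]
  exact isZero_zero C

lemma trivX_top (Z : C) : trivX n S Z (n + 2) = S.obj Z := by
  unfold trivX
  rw [Nat.mod_self, Nat.div_self (by omega)]
  simp

/-- The differentials of the trivial `(n+2)`-angle on `Z`. -/
noncomputable def trivD (Z : C) (i : ℕ) : trivX n S Z i ⟶ trivX n S Z (i + 1) :=
  if h : i % (n + 2) = 0 then
    ((-1 : ℤ) ^ (n * (i / (n + 2)))) • eqToHom (trivX_succ n S Z h)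
  else 0

lemma trivD_isIso (Z : C) {i : ℕ} (h : i % (n + 2) = 0) :
    IsIso (trivD n S Z i) := by
  rw [trivD, dif_pos h]
  exact isIso_zsmul_eqToHom _ _

lemma trivD_zero_eq (Z : C) :
    trivD n S Z 0 = eqToHom (trivX_succ n S Z (Nat.zero_mod _)) := by
  rw [trivD, dif_pos (Nat.zero_mod _)]
  rw [Nat.zero_div, Nat.mul_zero, pow_zero, one_smul]

lemma trivD_one_eq (Z : C) : trivD n S Z 1 = 0 := by
  rw [trivD, dif_neg]
  rw [Nat.mod_eq_of_lt (by omega)]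
  omega

/-- The trivial `(n+2)`-angle on `Z`, as a candidate. -/
noncomputable def trivCand [S.Additive] (Z : C) : Cand n S where
  X := trivX n S Z
  d := trivD n S Z
  σ i := eqToIso (trivX_shift n S Z i)
  compat i := by
    by_cases h : i % (n + 2) = 0
    · have h2 : (n + 2 + i) % (n + 2) = 0 := by rw [aux_mod_left]; exact h
      rw [trivD, trivD, dif_pos h, dif_pos h2, Functor.map_zsmul, eqToHom_map]
      simp only [eqToIso.hom, eqToIso.inv, Preadditive.comp_zsmul,
        Preadditive.zsmul_comp, smul_smul, eqToHom_trans]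
      congr 1
      rw [aux_div_left, Nat.mul_succ, pow_add]
      ring
    · have h2 : ¬ (n + 2 + i) % (n + 2) = 0 := by rw [aux_mod_left]; exact h
      rw [trivD, trivD, dif_neg h, dif_neg h2]
      simp

lemma trivCand_mem [S.Additive] (PA : PreAngulation n S) (Z : C) :
    trivCand n S Z ∈ PA.angles := by
  apply PA.triv_mem
  · exact trivD_isIso n S Z (Nat.zero_mod _)
  · intro j h2 hj
    exact trivX_isZero n S Z h2 hj

end AuxTriv

section AuxRot

/-- Iterated rotation. -/
def rotIter : ℕ → Cand n S → Cand n S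
  | 0, A => A
  | (k + 1), A => (rotIter k A).rot

lemma rotIter_mem (PA : PreAngulation n S) {A : Cand n S} (hA : A ∈ PA.angles) :
    ∀ k : ℕ, rotIter n S k A ∈ PA.angles
  | 0 => hA
  | (k + 1) => (PA.rot_mem _).mp (rotIter_mem PA hA k)

lemma rotIter_X (A : Cand n S) : ∀ (k i : ℕ), (rotIter n S k A).X i = A.X (i + k)
  | 0, i => rfl
  | (k + 1), i => by
    show (rotIter n S k A).X (i + 1) = A.X (i + (k + 1))
    rw [rotIter_X A k (i + 1)]
    congr 1
    omega

lemma rotIter_d_heq (A : Cand n S) :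
    ∀ (k i : ℕ), HEq ((rotIter n S k A).d i) (A.d (i + k))
  | 0, i => HEq.rfl
  | (k + 1), i => by
    show HEq ((rotIter n S k A).d (i + 1)) (A.d (i + (k + 1)))
    have h : i + 1 + k = i + (k + 1) := by omega
    exact h ▸ rotIter_d_heq A k (i + 1)

end AuxRot

section AuxExactness

/-- Consecutive morphisms in an `(n+2)`-angle compose to zero. -/
lemma comp_zero_at [S.Additive] (PA : PreAngulation n S) :
    ∀ (j : ℕ) (A : Cand n S), A ∈ PA.angles → A.d j ≫ A.d (j + 1) = 0
  | (j + 1), A, hA => comp_zero_at PA j A.rot ((PA.rot_mem A).mp hA)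
  | 0, A, hA => by
    set Z := A.X 0 with hZ
    have hT := trivCand_mem n S PA Z
    have p0 : trivX n S Z 0 = A.X 0 := trivX_zero n S Z
    have p1 : trivX n S Z 1 = A.X 0 := trivX_one n S Z
    obtain ⟨Φ, hΦ0, hΦ1⟩ := PA.ext_hom hT hA (eqToHom p0) (eqToHom p1 ≫ A.d 0) (by
      show trivD n S Z 0 ≫ _ = _
      rw [trivD_zero_eq]
      simp
      exact eqToHom_trans_assoc _ _ _)
    have hcomm := Φ.comm 1
    rw [hΦ1] at hcomm
    have hd1 : (trivCand n S Z).d 1 = 0 := trivD_one_eq n S Z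
    rw [hd1, zero_comp, Category.assoc] at hcomm
    calc A.d 0 ≫ A.d 1 = eqToHom p1.symm ≫ (eqToHom p1 ≫ A.d 0 ≫ A.d 1) := by simp
    _ = 0 := (congrArg (fun x => eqToHom p1.symm ≫ x) hcomm.symm).trans comp_zero

/-- Weak cokernel property of `(n+2)`-angles (in the ambient category). -/
lemma weak_cokernel_at [S.Additive] [S.Full] [S.Faithful] (PA : PreAngulation n S)
    (hS : ∀ Y : C, ∃ Z : C, Nonempty (S.obj Z ≅ Y)) :
    ∀ (j : ℕ) (A : Cand n S), A ∈ PA.angles → ∀ {Y : C} (u : A.X (j + 1) ⟶ Y),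
      A.d j ≫ u = 0 → ∃ k : A.X (j + 2) ⟶ Y, u = A.d (j + 1) ≫ k
  | (j + 1), A, hA, Y, u, hu =>
    weak_cokernel_at PA hS j A.rot ((PA.rot_mem A).mp hA) u hu
  | 0, A, hA, Y, u, hu => by
    obtain ⟨Z, ⟨cIso⟩⟩ := hS Y
    set T := trivCand n S Z with hTdef
    set U := rotIter n S (n + 1) T with hUdef
    have hU : U ∈ PA.angles := rotIter_mem n S PA (trivCand_mem n S PA Z) (n + 1)
    have p1 : U.X 1 = S.obj Z := by
      rw [hUdef, rotIter_X n S T (n + 1) 1]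
      have : 1 + (n + 1) = n + 2 := by omega
      rw [this]
      exact trivX_top n S Z
    have hd1 : IsIso (U.d 1) := by
      have hheq := rotIter_d_heq n S T (n + 1) 1
      have pa : U.X 1 = T.X (1 + (n + 1)) := rotIter_X n S T (n + 1) 1
      have pb : U.X 2 = T.X (1 + (n + 1) + 1) := by
        rw [hUdef, rotIter_X n S T (n + 1) 2]
        congr 1
        omega
      rw [heq_to_eq pa pb.symm.symm hheq]
      haveI : IsIso (T.d (1 + (n + 1))) := by
        show IsIso (trivD n S Z (1 + (n + 1)))
        apply trivD_isIso
        rw [show 1 + (n + 1) = n + 2 by omega, Nat.mod_self]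
      infer_instance
    set ι : Y ⟶ U.X 1 := cIso.inv ≫ eqToHom p1.symm with hι
    obtain ⟨Φ, hΦ0, hΦ1⟩ := PA.ext_hom hA hU (0 : A.X 0 ⟶ U.X 0) (u ≫ ι) (by
      rw [zero_comp, ← Category.assoc, hu, zero_comp])
    have hcomm := Φ.comm 1
    rw [hΦ1] at hcomm
    haveI : IsIso ι := by rw [hι]; infer_instance
    haveI : IsIso (ι ≫ U.d 1) := by infer_instance
    refine ⟨Φ.φ 2 ≫ inv (ι ≫ U.d 1), ?_⟩
    rw [← Category.assoc, hcomm]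
    simp [Category.assoc]

end AuxExactness

section AuxUnrot

variable {n S}

/-- The components of the un-rotation of a morphism of rotated candidates. -/
noncomputable def unrotPhi [S.Full] {A B : Cand n S} (Ψ : CandHom n S A.rot B.rot) :
    ∀ i, A.X i ⟶ B.X i
  | 0 => S.preimage ((A.σ 0).inv ≫ Ψ.φ (n + 1) ≫ (B.σ 0).hom)
  | (i + 1) => Ψ.φ i

/-- Un-rotating a morphism of rotated candidates. -/
noncomputable def CandHom.unrot [S.Full] [S.Faithful] {A B : Cand n S}
    (Ψ : CandHom n S A.rot B.rot) : CandHom n S A B where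
  φ := unrotPhi Ψ
  comm i := by
    cases i with
    | succ i => exact Ψ.comm i
    | zero =>
      show A.d 0 ≫ Ψ.φ 0 = S.preimage ((A.σ 0).inv ≫ Ψ.φ (n + 1) ≫ (B.σ 0).hom) ≫ B.d 0
      apply S.map_injective
      erw [Functor.map_comp, Functor.map_comp, Functor.map_preimage]
      obtain ⟨x, hx⟩ : ∃ x : A.X 1 ⟶ B.X 1, Ψ.φ 0 = x := ⟨_, rfl⟩
      obtain ⟨y, hy⟩ : ∃ y : A.X (n + 2 + 1) ⟶ B.X (n + 2 + 1), Ψ.φ (n + 2) = y := ⟨_, rfl⟩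
      obtain ⟨z, hz⟩ : ∃ z : A.X (n + 2) ⟶ B.X (n + 2), Ψ.φ (n + 1) = z := ⟨_, rfl⟩
      suffices h : S.map (A.d 0) ≫ S.map x =
          ((A.σ 0).inv ≫ z ≫ (B.σ 0).hom) ≫ S.map (B.d 0) by
        subst hx hz; exact h
      have hA := A.compat 0
      have hB := B.compat 0
      simp only [Nat.add_zero] at hA hB
      have hcm : A.d (n + 2) ≫ y = z ≫ B.d (n + 2) := by
        subst hy hz; exact Ψ.comm (n + 1)
      have hs : y = (A.σ 1).hom ≫ S.map x ≫ (B.σ 1).inv := by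
        subst hx hy; exact Ψ.shift 0
      have e1 : S.map (A.d 0) =
          ((-1 : ℤ) ^ n) • ((A.σ 0).inv ≫ A.d (n + 2) ≫ (A.σ 1).hom) := by
        rw [hA]
        simp only [Category.assoc, Iso.inv_hom_id_assoc, Iso.inv_hom_id, Category.comp_id,
          Preadditive.comp_zsmul, Preadditive.zsmul_comp, eps_eps_smul]
      have e2 : B.d (n + 2) ≫ (B.σ 1).hom =
          (B.σ 0).hom ≫ (((-1 : ℤ) ^ n) • S.map (B.d 0)) := by
        rw [hB]; simp
      have hψ0 : S.map x = (A.σ 1).inv ≫ y ≫ (B.σ 1).hom := by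
        rw [hs]; simp
      rw [e1, hψ0]
      simp only [Category.assoc, Preadditive.zsmul_comp, Preadditive.comp_zsmul,
        Iso.hom_inv_id_assoc]
      rw [reassoc_of% hcm, e2]
      simp [eps_eps_smul]
  shift i := by
    cases i with
    | succ i => exact Ψ.shift i
    | zero =>
      show Ψ.φ (n + 1) = (A.σ 0).hom ≫
        S.map (S.preimage ((A.σ 0).inv ≫ Ψ.φ (n + 1) ≫ (B.σ 0).hom)) ≫ (B.σ 0).inv
      rw [Functor.map_preimage]
      simp
      exact (Category.comp_id _).symm.trans ((congrArg (fun x => Ψ.φ (n + 1) ≫ x)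
        (B.σ 0).hom_inv_id).symm.trans (Category.assoc _ _ _).symm)

/-- Completion of commutative squares at an arbitrary position of `(n+2)`-angles. -/
lemma ext_hom_rot [S.Full] [S.Faithful] (PA : PreAngulation n S) :
    ∀ (j : ℕ) {A B : Cand n S}, A ∈ PA.angles → B ∈ PA.angles →
      ∀ (φa : A.X j ⟶ B.X j) (φb : A.X (j + 1) ⟶ B.X (j + 1)),
        A.d j ≫ φb = φa ≫ B.d j →
        ∃ Φ : CandHom n S A B, Φ.φ j = φa ∧ Φ.φ (j + 1) = φb
  | 0, A, B, hA, hB, φa, φb, sq => PA.ext_hom hA hB φa φb sq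
  | (j + 1), A, B, hA, hB, φa, φb, sq => by
    obtain ⟨Ψ, h1, h2⟩ :=
      ext_hom_rot PA j ((PA.rot_mem A).mp hA) ((PA.rot_mem B).mp hB) φa φb sq
    exact ⟨Ψ.unrot, h1, h2⟩

end AuxUnrot

section AuxConn

/-- Naturality of the connecting morphism with respect to morphisms of realizing
conflations. -/
lemma conn_natural (e : C ≌ C) [e.functor.Additive] (PA : PreAngulation n e.functor)
    (hP : AddClosed P)
    (hHom : ∀ {A A' : C}, P A → P A' → ∀ f : e.functor.obj A ⟶ A', f = 0)
    {A₀ A₀' Atop Atop' : C} (h₀ : P A₀) (htop' : P Atop')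
    (E : ExtSeq n e.functor P PA.angles A₀ Atop)
    (E' : ExtSeq n e.functor P PA.angles A₀' Atop')
    (f : Atop ⟶ e.functor.obj A₀) (f' : Atop' ⟶ e.functor.obj A₀')
    (hf : Realizes n e.functor P PA.angles E f)
    (hf' : Realizes n e.functor P PA.angles E' f')
    (a : A₀ ⟶ A₀') (b : Atop ⟶ Atop') (ψ : ∀ j, E.X j ⟶ E'.X j)
    (hψ : ∀ j, j ≤ n → E.d j ≫ ψ (j + 1) = ψ j ≫ E'.d j)
    (hψ0 : ψ 0 = E.e₀.hom ≫ a ≫ E'.e₀.inv)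
    (hψtop : ψ (n + 1) = E.etop.hom ≫ b ≫ E'.etop.inv) :
    b ≫ f' = f ≫ e.functor.map a := by
  have hS : ∀ Y : C, ∃ Z : C, Nonempty (e.functor.obj Z ≅ Y) :=
    fun Y => ⟨e.inverse.obj Y, ⟨e.counitIso.app Y⟩⟩
  obtain ⟨W, hW, eE, hdE, hcE⟩ := hf
  obtain ⟨W', hW', eE', hdE', hcE'⟩ := hf'
  -- the conjugated ladder commutes with the differentials
  have hψW : ∀ j (hj : j ≤ n),
      W.d j ≫ ((eE (j+1) (by omega)).hom ≫ ψ (j+1) ≫ (eE' (j+1) (by omega)).inv) =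
      ((eE j (by omega)).hom ≫ ψ j ≫ (eE' j (by omega)).inv) ≫ W'.d j := by
    intro j hj
    rw [hdE j (by omega), hdE' j (by omega)]
    simp only [Category.assoc, Iso.inv_hom_id_assoc]
    rw [reassoc_of% (hψ j hj)]
  obtain ⟨Φ, hΦ0, hΦ1⟩ := PA.ext_hom hW hW'
    ((eE 0 (by omega)).hom ≫ ψ 0 ≫ (eE' 0 (by omega)).inv)
    ((eE 1 (by omega)).hom ≫ ψ 1 ≫ (eE' 1 (by omega)).inv)
    (hψW 0 (by omega))
  -- the homotopy-type induction
  have key : ∀ m (hm : m ≤ n), ∃ k : W.X (m+1+1) ⟶ W'.X (m+1),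
      ((((eE (m+1) (by omega)).hom ≫ ψ (m+1) ≫ (eE' (m+1) (by omega)).inv) - Φ.φ (m+1))
        ≫ W'.d (m+1)) = W.d (m+1) ≫ k ≫ W'.d (m+1) := by
    intro m
    induction m with
    | zero =>
      intro _
      refine ⟨0, ?_⟩
      simp only [Nat.reduceAdd, Nat.zero_add]
      rw [hΦ1]
      simp
    | succ m ih =>
      intro hm
      obtain ⟨k, hk⟩ := ih (by omega)
      have h1 : W.d (m+1) ≫
          ((((eE (m+1+1) (by omega)).hom ≫ ψ (m+1+1) ≫ (eE' (m+1+1) (by omega)).inv)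
              - Φ.φ (m+1+1)) - k ≫ W'.d (m+1)) = 0 := by
        simp only [Preadditive.comp_sub]
        rw [hψW (m+1) hm, Φ.comm (m+1)]
        rw [← Preadditive.sub_comp, hk]
        simp
      obtain ⟨k', hk'⟩ := weak_cokernel_at n e.functor PA hS (m+1) W hW _ h1
      refine ⟨k', ?_⟩
      rw [sub_eq_iff_eq_add] at hk'
      rw [hk', Preadditive.add_comp]
      simp only [Category.assoc]
      rw [comp_zero_at n e.functor PA (m+1) W' hW']
      simp
  obtain ⟨k, hk⟩ := key n le_rfl
  have hk0 : k = 0 := by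
    have hPW0 : P (W.X 0) := hP.2.2 (W.X 0) A₀ h₀
      ((eE 0 (by omega)).hom ≫ E.e₀.hom) (E.e₀.inv ≫ (eE 0 (by omega)).inv) (by simp)
    have hPWtop : P (W'.X (n+1)) := hP.2.2 (W'.X (n+1)) Atop' htop'
      ((eE' (n+1) le_rfl).hom ≫ E'.etop.hom) (E'.etop.inv ≫ (eE' (n+1) le_rfl).inv) (by simp)
    have hm0 : (W.σ 0).inv ≫ k = 0 := hHom hPW0 hPWtop _
    calc k = (W.σ 0).hom ≫ ((W.σ 0).inv ≫ k) := by simp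
    _ = 0 := by rw [hm0]; simp
  have htop2 : ((eE (n+1) le_rfl).hom ≫ ψ (n+1) ≫ (eE' (n+1) le_rfl).inv) ≫ W'.d (n+1)
      = Φ.φ (n+1) ≫ W'.d (n+1) := by
    rw [← sub_eq_zero, ← Preadditive.sub_comp]
    rw [hk, hk0]
    simp
  have hΦconn : Φ.φ (n+1) ≫ Cand.conn W' = Cand.conn W ≫ e.functor.map (Φ.φ 0) := by
    have hc := Φ.comm (n+1)
    have hs := Φ.shift 0
    simp only [Nat.add_zero] at hs
    show Φ.φ (n+1) ≫ W'.d (n+1) ≫ (W'.σ 0).hom =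
      (W.d (n+1) ≫ (W.σ 0).hom) ≫ e.functor.map (Φ.φ 0)
    rw [← Category.assoc, ← hc, Category.assoc, hs]
    simp
  have main : ((eE (n+1) le_rfl).hom ≫ ψ (n+1) ≫ (eE' (n+1) le_rfl).inv) ≫ Cand.conn W'
      = Cand.conn W ≫ e.functor.map (Φ.φ 0) := by
    show _ ≫ W'.d (n+1) ≫ (W'.σ 0).hom = _
    rw [← Category.assoc, htop2, Category.assoc]
    exact hΦconn
  rw [hψtop, hΦ0, hψ0, hcE, hcE'] at main
  simp only [Category.assoc, Iso.inv_hom_id_assoc, ← Functor.map_comp,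
    Iso.inv_hom_id_assoc, Iso.hom_inv_id_assoc] at main
  rw [cancel_epi, cancel_epi] at main
  have main2 : (b ≫ f') ≫ e.functor.map (E'.e₀.inv ≫ (eE' 0 (Nat.zero_le _)).inv)
      = (f ≫ e.functor.map a) ≫ e.functor.map (E'.e₀.inv ≫ (eE' 0 (Nat.zero_le _)).inv) := by
    simpa [Category.assoc, Functor.map_comp] using main
  exact (cancel_mono _).mp main2

/-- Two conflations realizing the same morphism are related by a morphism of
conflations fixing the end terms. -/
lemma rel_of_realizes (e : C ≌ C) [e.functor.Additive] (PA : PreAngulation n e.functor)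
    {A₀ Atop : C} (E E' : ExtSeq n e.functor P PA.angles A₀ Atop)
    (f : Atop ⟶ e.functor.obj A₀)
    (hf : Realizes n e.functor P PA.angles E f)
    (hf' : Realizes n e.functor P PA.angles E' f) :
    ExtRel n e.functor P PA.angles E E' := by
  obtain ⟨W, hW, eE, hdE, hcE⟩ := hf
  obtain ⟨W', hW', eE', hdE', hcE'⟩ := hf'
  set φa : W.X (n+1) ⟶ W'.X (n+1) :=
    (eE (n+1) le_rfl).hom ≫ E.etop.hom ≫ E'.etop.inv ≫ (eE' (n+1) le_rfl).inv with hφa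
  set φb : W.X (n+2) ⟶ W'.X (n+2) :=
    (W.σ 0).hom ≫ e.functor.map ((eE 0 (Nat.zero_le _)).hom ≫ E.e₀.hom ≫ E'.e₀.inv ≫
      (eE' 0 (Nat.zero_le _)).inv) ≫ (W'.σ 0).inv with hφb
  have hWd : W.d (n+1) = Cand.conn W ≫ (W.σ 0).inv := by simp [Cand.conn]
  have hWd' : W'.d (n+1) = Cand.conn W' ≫ (W'.σ 0).inv := by simp [Cand.conn]
  have sq : W.d (n+1) ≫ φb = φa ≫ W'.d (n+1) := by
    rw [hφa, hφb, hWd, hWd', hcE, hcE']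
    simp only [Category.assoc, Iso.inv_hom_id_assoc, Iso.hom_inv_id_assoc,
      ← Functor.map_comp]
    simp
  obtain ⟨Φ, hΦa, hΦb⟩ := ext_hom_rot PA (n+1) hW hW' φa φb sq
  have hΦb2 : Φ.φ (n+2) = φb := hΦb
  have hΦ0 : Φ.φ 0 = (eE 0 (Nat.zero_le _)).hom ≫ E.e₀.hom ≫ E'.e₀.inv ≫
      (eE' 0 (Nat.zero_le _)).inv := by
    apply e.functor.map_injective
    have hs := Φ.shift 0
    simp only [Nat.add_zero] at hs
    rw [hΦb2, hφb] at hs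
    have h2 : (W.σ 0).inv ≫ ((W.σ 0).hom ≫
        e.functor.map ((eE 0 (Nat.zero_le _)).hom ≫ E.e₀.hom ≫ E'.e₀.inv ≫
          (eE' 0 (Nat.zero_le _)).inv) ≫ (W'.σ 0).inv) ≫ (W'.σ 0).hom
        = (W.σ 0).inv ≫ ((W.σ 0).hom ≫ e.functor.map (Φ.φ 0) ≫ (W'.σ 0).inv) ≫
          (W'.σ 0).hom := by rw [← hs]
    simpa using h2.symm
  refine ⟨fun j => if h : j ≤ n + 1 then (eE j h).inv ≫ Φ.φ j ≫ (eE' j h).hom else 0,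
    ?_, ?_, ?_⟩
  · intro j hj
    beta_reduce
    rw [dif_pos (show j ≤ n + 1 by omega), dif_pos (show j + 1 ≤ n + 1 by omega)]
    have hdj : E.d j = (eE j (by omega)).inv ≫ W.d j ≫ (eE (j+1) (by omega)).hom := by
      rw [hdE j (by omega)]; simp
    have hdj' : E'.d j = (eE' j (by omega)).inv ≫ W'.d j ≫ (eE' (j+1) (by omega)).hom := by
      rw [hdE' j (by omega)]; simp
    rw [hdj, hdj']
    simp only [Category.assoc, Iso.hom_inv_id_assoc]
    rw [reassoc_of% (Φ.comm j)]
  · beta_reduce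
    rw [dif_pos (Nat.zero_le _), hΦ0]
    simp
  · beta_reduce
    rw [dif_pos (le_rfl), hΦa, hφa]
    simp

end AuxConn

/-- Let `n ≥ 1`, `(F, Σₙ, ⬠)` an `(n+2)`-angulated Krull–Schmidt
category and `A ⊆ F` a full, additive, `n`-extension closed subcategory with
`Hom(Σₙ A, A) = 0`.  Then there is a family of bijections
`Φ : Hom(A_{n+1}, Σₙ A₀) ≃ YExtⁿ(A_{n+1}, A₀)`, sending a morphism `f` to the class of
any `A`-conflation realizing `f` (i.e. obtained from an `(n+2)`-angle with connecting
morphism `f`), which is additive for an abelian group structure on `YExtⁿ` and natural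
in both arguments: for any morphism of realizing conflations which is `a : A₀ ⟶ A₀'`
in position `0` and `b : A_{n+1} ⟶ A'_{n+1}` in position `n+1`, the corresponding
connecting morphisms satisfy `b ≫ f' = f ≫ Σₙ a`. -/
theorem statement_1 (hn : 1 ≤ n) (e : C ≌ C) [e.functor.Additive]
    (ANG : Angulation n e.functor) (hKS : KrullSchmidt C)
    (hP : AddClosed P)
    (hExt : ExtClosed n e.functor P ANG.angles)
    (hHom : ∀ {A A' : C}, P A → P A' → ∀ f : e.functor.obj A ⟶ A', f = 0) :
    ∃ Φ : ∀ (A₀ Atop : C), P A₀ → P Atop →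
      (Atop ⟶ e.functor.obj A₀) → YExt n e.functor P ANG.angles A₀ Atop,
      -- each Φ is a bijection
      (∀ (A₀ Atop : C) (h₀ : P A₀) (htop : P Atop),
        Function.Bijective (Φ A₀ Atop h₀ htop)) ∧
      -- Φ sends f to the class of any conflation realizing f
      (∀ (A₀ Atop : C) (h₀ : P A₀) (htop : P Atop) (f : Atop ⟶ e.functor.obj A₀)
        (E : ExtSeq n e.functor P ANG.angles A₀ Atop),
        Realizes n e.functor P ANG.angles E f → Φ A₀ Atop h₀ htop f = Quot.mk _ E) ∧
      -- Φ is additive for an abelian group structure on YExt (bilinearity)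
      (∀ (A₀ Atop : C) (h₀ : P A₀) (htop : P Atop),
        ∃ inst : AddCommGroup (YExt n e.functor P ANG.angles A₀ Atop),
          ∀ f g : Atop ⟶ e.functor.obj A₀,
            Φ A₀ Atop h₀ htop (f + g) = inst.add (Φ A₀ Atop h₀ htop f) (Φ A₀ Atop h₀ htop g)) ∧
      -- binaturality of the correspondence between extensions and connecting morphisms
      (∀ (A₀ A₀' Atop Atop' : C), P A₀ → P A₀' → P Atop → P Atop' →
        ∀ (E : ExtSeq n e.functor P ANG.angles A₀ Atop)
          (E' : ExtSeq n e.functor P ANG.angles A₀' Atop')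
          (f : Atop ⟶ e.functor.obj A₀) (f' : Atop' ⟶ e.functor.obj A₀'),
          Realizes n e.functor P ANG.angles E f →
          Realizes n e.functor P ANG.angles E' f' →
          ∀ (a : A₀ ⟶ A₀') (b : Atop ⟶ Atop') (ψ : ∀ j, E.X j ⟶ E'.X j),
            (∀ j, j ≤ n → E.d j ≫ ψ (j + 1) = ψ j ≫ E'.d j) →
            ψ 0 = E.e₀.hom ≫ a ≫ E'.e₀.inv →
            ψ (n + 1) = E.etop.hom ≫ b ≫ E'.etop.inv →
            b ≫ f' = f ≫ e.functor.map a) := by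
  classical
  -- existence of conflations realizing a given morphism
  have mkE : ∀ (A₀ Atop : C), P A₀ → P Atop → ∀ f : Atop ⟶ e.functor.obj A₀,
      ∃ E : ExtSeq n e.functor P ANG.angles A₀ Atop,
        Realizes n e.functor P ANG.angles E f := by
    intro A₀ Atop h₀ htop f
    obtain ⟨W, hW, e₀, etop, hPmid, hconn⟩ := hExt h₀ htop f
    have hPall : ∀ j, j ≤ n + 1 → P (W.X j) := by
      intro j hj
      by_cases hj0 : j = 0
      · subst hj0
        exact hP.2.2 _ _ h₀ e₀.hom e₀.inv (by simp)
      · by_cases hjt : j = n + 1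
        · subst hjt
          exact hP.2.2 _ _ htop etop.hom etop.inv (by simp)
        · exact hPmid j (by omega) (by omega)
    refine ⟨⟨W.X, W.d, ⟨hPall, W, hW, fun j _ => Iso.refl _, fun j h => by simp⟩, e₀, etop⟩,
      W, hW, fun j _ => Iso.refl _, fun j h => by simp, ?_⟩
    rw [hconn]
    simp
  obtain ⟨mk, mk_real⟩ : ∃ mk : ∀ (A₀ Atop : C), P A₀ → P Atop →
      (Atop ⟶ e.functor.obj A₀) → ExtSeq n e.functor P ANG.angles A₀ Atop,
      ∀ A₀ Atop h₀ htop f,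
        Realizes n e.functor P ANG.angles (mk A₀ Atop h₀ htop f) f :=
    ⟨fun A₀ Atop h₀ htop f => (mkE A₀ Atop h₀ htop f).choose,
      fun A₀ Atop h₀ htop f => (mkE A₀ Atop h₀ htop f).choose_spec⟩
  -- every conflation realizes some morphism
  have exReal : ∀ (A₀ Atop : C) (E : ExtSeq n e.functor P ANG.angles A₀ Atop),
      ∃ g : Atop ⟶ e.functor.obj A₀, Realizes n e.functor P ANG.angles E g := by
    intro A₀ Atop E
    obtain ⟨hPall, W, hW, em, hm⟩ := E.confl
    refine ⟨E.etop.inv ≫ (em (n+1) le_rfl).inv ≫ Cand.conn W ≫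
      e.functor.map ((em 0 (Nat.zero_le _)).hom ≫ E.e₀.hom), W, hW, em, hm, ?_⟩
    simp [← Functor.map_comp]
  obtain ⟨cf, cf_real⟩ : ∃ cf : ∀ (A₀ Atop : C),
      ExtSeq n e.functor P ANG.angles A₀ Atop → (Atop ⟶ e.functor.obj A₀),
      ∀ A₀ Atop E, Realizes n e.functor P ANG.angles E (cf A₀ Atop E) :=
    ⟨fun A₀ Atop E => (exReal A₀ Atop E).choose,
      fun A₀ Atop E => (exReal A₀ Atop E).choose_spec⟩
  -- a conflation realizes a unique morphism
  have uniq : ∀ (A₀ Atop : C), P A₀ → P Atop →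
      ∀ (E : ExtSeq n e.functor P ANG.angles A₀ Atop) (f g : Atop ⟶ e.functor.obj A₀),
        Realizes n e.functor P ANG.angles E f → Realizes n e.functor P ANG.angles E g →
        f = g := by
    intro A₀ Atop h₀ htop E f g hf hg
    have := conn_natural n P e ANG.toPreAngulation hP hHom h₀ htop E E f g hf hg
      (𝟙 A₀) (𝟙 Atop) (fun j => 𝟙 _) (fun j hj => by simp) (by simp) (by simp)
    symm
    simpa using this
  -- the value of Φ on any realizing conflation
  have hprop2 : ∀ (A₀ Atop : C) (h₀ : P A₀) (htop : P Atop)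
      (f : Atop ⟶ e.functor.obj A₀) (E : ExtSeq n e.functor P ANG.angles A₀ Atop),
      Realizes n e.functor P ANG.angles E f →
      (Quot.mk (ExtRel n e.functor P ANG.angles) (mk A₀ Atop h₀ htop f) : YExt n e.functor P ANG.angles A₀ Atop) = Quot.mk _ E := by
    intro A₀ Atop h₀ htop f E hreal
    exact Quot.sound (rel_of_realizes n P e ANG.toPreAngulation
      (mk A₀ Atop h₀ htop f) E f (mk_real A₀ Atop h₀ htop f) hreal)
  -- the connecting morphism is invariant under the relation
  have welldef : ∀ (A₀ Atop : C), P A₀ → P Atop →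
      ∀ (E F : ExtSeq n e.functor P ANG.angles A₀ Atop),
        ExtRel n e.functor P ANG.angles E F → cf A₀ Atop E = cf A₀ Atop F := by
    intro A₀ Atop h₀ htop E F hEF
    obtain ⟨φ, hc, h0, ht⟩ := hEF
    have := conn_natural n P e ANG.toPreAngulation hP hHom h₀ htop E F
      (cf A₀ Atop E) (cf A₀ Atop F) (cf_real A₀ Atop E) (cf_real A₀ Atop F)
      (𝟙 A₀) (𝟙 Atop) φ hc (by rw [h0]; simp) (by rw [ht]; simp)
    symm
    simpa using this
  -- bijectivity
  have hbij : ∀ (A₀ Atop : C) (h₀ : P A₀) (htop : P Atop),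
      Function.Bijective (fun f => (Quot.mk (ExtRel n e.functor P ANG.angles)
        (mk A₀ Atop h₀ htop f) : YExt n e.functor P ANG.angles A₀ Atop)) := by
    intro A₀ Atop h₀ htop
    constructor
    · intro f g hfg
      have h1 : cf A₀ Atop (mk A₀ Atop h₀ htop f) = cf A₀ Atop (mk A₀ Atop h₀ htop g) := by
        have := congrArg (Quot.lift (cf A₀ Atop) (welldef A₀ Atop h₀ htop)) hfg
        simpa using this
      have h2 : f = cf A₀ Atop (mk A₀ Atop h₀ htop f) :=
        uniq A₀ Atop h₀ htop _ _ _ (mk_real A₀ Atop h₀ htop f) (cf_real A₀ Atop _)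
      have h3 : g = cf A₀ Atop (mk A₀ Atop h₀ htop g) :=
        uniq A₀ Atop h₀ htop _ _ _ (mk_real A₀ Atop h₀ htop g) (cf_real A₀ Atop _)
      rw [h2, h3, h1]
    · intro q
      induction q using Quot.ind with
      | _ E => exact ⟨cf A₀ Atop E, hprop2 A₀ Atop h₀ htop (cf A₀ Atop E) E
          (cf_real A₀ Atop E)⟩
  refine ⟨fun A₀ Atop h₀ htop f => Quot.mk _ (mk A₀ Atop h₀ htop f), hbij, ?_, ?_, ?_⟩
  · -- property 2
    intro A₀ Atop h₀ htop f E hreal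
    exact hprop2 A₀ Atop h₀ htop f E hreal
  · -- the transported group structure
    intro A₀ Atop h₀ htop
    let eqv : (Atop ⟶ e.functor.obj A₀) ≃ YExt n e.functor P ANG.angles A₀ Atop :=
      Equiv.ofBijective _ (hbij A₀ Atop h₀ htop)
    refine ⟨eqv.symm.addCommGroup, ?_⟩
    intro f g
    change eqv (f + g) = eqv (eqv.symm (eqv f) + eqv.symm (eqv g))
    rw [Equiv.symm_apply_apply, Equiv.symm_apply_apply]
  · -- binaturality
    intro A₀ A₀' Atop Atop' h₀ h₀' htop htop' E E' f f' hf hf' a b ψ hc h0 ht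
    exact conn_natural n P e ANG.toPreAngulation hP hHom h₀ htop' E E' f f' hf hf'
      a b ψ hc h0 ht

end NAng
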